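/- For β > β_c, for every ε > 0 there exists N ∈ ℕ such that for all m > N and all L ∈ ℕ, ∑_{k=1}^{L} μ_{β,m+L}(B_k) < ε. -/

import Mathlib

open MeasureTheory Set Real Filter
open Pointwise

noncomputable def cantorStage : ℕ → Set ℝ
  | 0 => Set.Icc 0 1
  | (m+1) => (fun x => x / 3) '' cantorStage m ∪ (fun x => (x + 2) / 3) '' cantorStage m

noncomputable def Bset (m : ℕ) : Set ℝ := cantorStage (m - 1) \ cantorStage m

noncomputable def psi (A : ℕ → ℝ) (n : ℕ) (x : ℝ) : ℝ :=
  -∑ k ∈ Finset.Icc 1 n, A k * (Bset k).indicator (fun _ => (1:ℝ)) x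

noncomputable def hc : ℝ := Real.log (3/2)

noncomputable def psiα (α : ℝ) : ℕ → ℝ → ℝ := psi (fun k => α * k)

noncomputable def Zf (α β : ℝ) (n : ℕ) : ℝ :=
  ∫ x in Set.Icc (0:ℝ) 1, Real.exp (-β * psiα α n x)

noncomputable def gibbs (α β : ℝ) (n : ℕ) (A : Set ℝ) : ℝ :=
  (∫ x in A ∩ Set.Icc (0:ℝ) 1, Real.exp (-β * psiα α n x)) / Zf α β n

lemma cantor_subset_Icc (m : ℕ) : cantorStage m ⊆ Set.Icc 0 1 := by
  induction m with
  | zero => exact subset_rfl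
  | succ m ih =>
    rintro x (⟨y, hy, rfl⟩ | ⟨y, hy, rfl⟩) <;>
      obtain ⟨h0, h1⟩ := ih hy <;> constructor <;> nlinarith

lemma cantor_succ_subset (m : ℕ) : cantorStage (m + 1) ⊆ cantorStage m := by
  induction m with
  | zero => exact cantor_subset_Icc 1
  | succ m ih =>
    rintro x (⟨y, hy, rfl⟩ | ⟨y, hy, rfl⟩)
    · exact Or.inl ⟨y, ih hy, rfl⟩
    · exact Or.inr ⟨y, ih hy, rfl⟩

lemma cantor_antitone : Antitone cantorStage := by
  apply antitone_nat_of_succ_le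
  exact fun n => cantor_succ_subset n

lemma cantor_compact (m : ℕ) : IsCompact (cantorStage m) := by
  induction m with
  | zero => exact isCompact_Icc
  | succ m ih =>
    exact IsCompact.union
      (ih.image (by continuity)) (ih.image (by continuity))

lemma cantor_meas (m : ℕ) : MeasurableSet (cantorStage m) :=
  (cantor_compact m).isClosed.measurableSet

lemma Bset_meas (k : ℕ) : MeasurableSet (Bset k) :=
  (cantor_meas _).diff (cantor_meas _)

lemma Bset_subset_Icc (k : ℕ) : Bset k ⊆ Set.Icc 0 1 :=
  fun x hx => cantor_subset_Icc _ hx.1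

lemma Bset_disjoint {j k : ℕ} (hj : 1 ≤ j) (hjk : j < k) : Disjoint (Bset j) (Bset k) := by
  refine Set.disjoint_left.2 fun x hxj hxk => ?_
  have : cantorStage (k - 1) ⊆ cantorStage j := cantor_antitone (by omega)
  exact hxj.2 (this hxk.1)

lemma volume_cantor (m : ℕ) : volume (cantorStage m) = ENNReal.ofReal ((2/3) ^ m) := by
  induction m with
  | zero => simp [cantorStage, Real.volume_Icc]
  | succ m ih =>
    have himg1 : (fun x : ℝ => x / 3) '' cantorStage m = (3⁻¹ : ℝ) • cantorStage m := by
      ext x; simp [Set.mem_smul_set, div_eq_inv_mul, mul_comm]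
    have himg2 : (fun x : ℝ => (x + 2) / 3) '' cantorStage m
        = (fun x : ℝ => x + 2/3) '' ((3⁻¹ : ℝ) • cantorStage m) := by
      rw [← Set.image_smul, Set.image_image]
      apply Set.image_congr
      intro x _; simp only [smul_eq_mul]; ring
    have hv1 : volume ((fun x : ℝ => x / 3) '' cantorStage m)
        = ENNReal.ofReal (3⁻¹) * volume (cantorStage m) := by
      rw [himg1, Measure.addHaar_smul_of_nonneg volume (by norm_num : (0:ℝ) ≤ 3⁻¹)]
      simp
    have hv2 : volume ((fun x : ℝ => (x + 2) / 3) '' cantorStage m)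
        = ENNReal.ofReal (3⁻¹) * volume (cantorStage m) := by
      rw [himg2, Set.image_add_right, measure_preimage_add_right,
        Measure.addHaar_smul_of_nonneg volume (by norm_num : (0:ℝ) ≤ 3⁻¹)]
      simp
    have hdisj : Disjoint ((fun x : ℝ => x / 3) '' cantorStage m)
        ((fun x : ℝ => (x + 2) / 3) '' cantorStage m) := by
      refine Set.disjoint_left.2 ?_
      rintro x ⟨y, hy, rfl⟩ ⟨z, hz, hzx⟩
      obtain ⟨hy0, hy1⟩ := cantor_subset_Icc m hy
      obtain ⟨hz0, hz1⟩ := cantor_subset_Icc m hz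
      have : (z + 2) / 3 = y / 3 := hzx
      nlinarith
    show volume (_ ∪ _) = _
    rw [measure_union hdisj ((cantor_compact m).image (by continuity)).isClosed.measurableSet,
      hv1, hv2, ih, ← ENNReal.ofReal_mul (by norm_num),
      ← ENNReal.ofReal_add (by positivity) (by positivity)]
    congr 1
    ring

lemma volume_Bset {k : ℕ} (hk : 1 ≤ k) :
    volume (Bset k) = ENNReal.ofReal ((1/3) * (2/3) ^ (k - 1)) := by
  have hsub : cantorStage k ⊆ cantorStage (k - 1) := cantor_antitone (by omega)
  rw [Bset, measure_diff hsub (cantor_meas k).nullMeasurableSet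
      (by rw [volume_cantor]; exact ENNReal.ofReal_ne_top),
    volume_cantor, volume_cantor,
    ← ENNReal.ofReal_sub _ (by positivity)]
  congr 1
  obtain ⟨j, rfl⟩ : ∃ j, k = j + 1 := ⟨k - 1, by omega⟩
  simp only [Nat.add_sub_cancel]
  ring

lemma psi_meas (α : ℝ) (n : ℕ) : Measurable (psiα α n) := by
  apply Measurable.neg
  apply Finset.measurable_sum
  intro k _
  exact (measurable_const.indicator (Bset_meas k)).const_mul _

lemma psi_nonpos {α : ℝ} (hα : 0 ≤ α) (n : ℕ) (x : ℝ) : psiα α n x ≤ 0 := by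
  simp only [psiα, psi, neg_nonpos]
  apply Finset.sum_nonneg
  intro k hk
  have hk1 : 1 ≤ k := (Finset.mem_Icc.1 hk).1
  apply mul_nonneg (by positivity)
  exact Set.indicator_nonneg (fun _ _ => by norm_num) x

lemma psi_on_B {α : ℝ} {n k : ℕ} (hk : 1 ≤ k) (hkn : k ≤ n) {x : ℝ} (hx : x ∈ Bset k) :
    psiα α n x = -(α * k) := by
  simp only [psiα, psi, neg_inj]
  rw [Finset.sum_eq_single k]
  · rw [Set.indicator_of_mem hx, mul_one]
  · intro j hj hjk
    have hj1 : 1 ≤ j := (Finset.mem_Icc.1 hj).1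
    have : x ∉ Bset j := by
      rcases lt_or_gt_of_ne hjk with h | h
      · exact Set.disjoint_right.1 (Bset_disjoint hj1 h) hx
      · exact Set.disjoint_left.1 (Bset_disjoint hk h) hx
    rw [Set.indicator_of_notMem this, mul_zero]
  · intro h
    exact absurd (Finset.mem_Icc.2 ⟨hk, hkn⟩) h

lemma integrable_f {α : ℝ} (hα : 0 ≤ α) (β : ℝ) (hβ : 0 ≤ β) (n : ℕ) :
    IntegrableOn (fun x => Real.exp (-β * psiα α n x)) (Set.Icc (0:ℝ) 1) := by
  apply Measure.integrableOn_of_bounded (M := Real.exp (β * (α * n)))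
  · rw [Real.volume_Icc]; exact ENNReal.ofReal_ne_top
  · exact ((psi_meas α n).const_mul (-β)).exp.aestronglyMeasurable
  · apply Filter.Eventually.of_forall
    intro x
    rw [Real.norm_eq_abs, abs_of_pos (Real.exp_pos _), Real.exp_le_exp]
    have hb : -(α * n) ≤ psiα α n x := by
      simp only [psiα, psi, neg_le_neg_iff]
      calc ∑ k ∈ Finset.Icc 1 n, α * k * (Bset k).indicator (fun _ => (1:ℝ)) x
          ≤ ∑ k ∈ Finset.Icc 1 n, α * n * (Bset k).indicator (fun _ => (1:ℝ)) x := by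
            apply Finset.sum_le_sum
            intro k hk
            obtain ⟨hk1, hkn⟩ := Finset.mem_Icc.1 hk
            apply mul_le_mul_of_nonneg_right
            · apply mul_le_mul_of_nonneg_left _ hα
              exact_mod_cast hkn
            · exact Set.indicator_nonneg (fun _ _ => by norm_num) x
        _ = α * n * ∑ k ∈ Finset.Icc 1 n, (Bset k).indicator (fun _ => (1:ℝ)) x := by
            rw [Finset.mul_sum]
        _ ≤ α * n * 1 := ?_
        _ = α * n := mul_one _
      apply mul_le_mul_of_nonneg_left _ (by positivity)
      -- sum of indicators of pairwise disjoint sets ≤ 1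
      by_cases hx : ∃ k ∈ Finset.Icc 1 n, x ∈ Bset k
      · obtain ⟨k0, hk0, hxk0⟩ := hx
        rw [Finset.sum_eq_single k0]
        · rw [Set.indicator_of_mem hxk0]
        · intro j hj hjk
          have hj1 : 1 ≤ j := (Finset.mem_Icc.1 hj).1
          have hk01 : 1 ≤ k0 := (Finset.mem_Icc.1 hk0).1
          have : x ∉ Bset j := by
            rcases lt_or_gt_of_ne hjk with h | h
            · exact Set.disjoint_right.1 (Bset_disjoint hj1 h) hxk0
            · exact Set.disjoint_left.1 (Bset_disjoint hk01 h) hxk0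
          rw [Set.indicator_of_notMem this]
        · intro h; exact absurd hk0 h
      · push_neg at hx
        rw [Finset.sum_eq_zero]
        · norm_num
        · intro k hk
          rw [Set.indicator_of_notMem (hx k hk)]
    calc -β * psiα α n x ≤ -β * (-(α * n)) :=
          mul_le_mul_of_nonpos_left hb (by linarith)
      _ = β * (α * n) := by ring

lemma integral_on_B {α : ℝ} (hα : 0 ≤ α) {β : ℝ} (hβ : 0 ≤ β) {n k : ℕ}
    (hk : 1 ≤ k) (hkn : k ≤ n) :
    ∫ x in Bset k ∩ Set.Icc (0:ℝ) 1, Real.exp (-β * psiα α n x)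
      = Real.exp (β * (α * k)) * ((1/3) * (2/3) ^ (k - 1)) := by
  rw [Set.inter_eq_left.2 (Bset_subset_Icc k)]
  rw [setIntegral_congr_fun (Bset_meas k) (g := fun _ => Real.exp (β * (α * k)))]
  · rw [setIntegral_const, measureReal_def, volume_Bset hk, smul_eq_mul,
      ENNReal.toReal_ofReal (by positivity), mul_comm]
  · intro x hx
    simp only
    rw [psi_on_B hk hkn hx]
    ring_nf

lemma Z_lower {α : ℝ} (hα : 0 ≤ α) {β : ℝ} (hβ : 0 ≤ β) {n : ℕ} (hn : 1 ≤ n) :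
    Real.exp (β * (α * n)) * ((1/3) * (2/3) ^ (n - 1)) ≤ Zf α β n := by
  rw [← integral_on_B hα hβ hn le_rfl, Set.inter_eq_left.2 (Bset_subset_Icc n)]
  apply setIntegral_mono_set (integrable_f hα β hβ n)
  · exact Filter.Eventually.of_forall fun x => (Real.exp_pos _).le
  · exact HasSubset.Subset.eventuallyLE (Bset_subset_Icc n)

lemma Z_pos {α : ℝ} (hα : 0 ≤ α) {β : ℝ} (hβ : 0 ≤ β) {n : ℕ} (hn : 1 ≤ n) :
    0 < Zf α β n :=
  lt_of_lt_of_le (by positivity) (Z_lower hα hβ hn)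

theorem stmt11 (α β : ℝ) (hα : 0 < α) (hβc : hc / α < β) :
    ∀ ε > 0, ∃ N : ℕ, ∀ m > N, ∀ L : ℕ,
      ∑ k ∈ Finset.Icc 1 L, gibbs α β (m + L) (Bset k) < ε := by
  intro ε hε
  have hβα : hc < β * α := by
    have := (div_lt_iff₀ hα).1 hβc
    linarith
  have hβ : 0 < β := by
    have hc_pos : 0 < hc := Real.log_pos (by norm_num)
    nlinarith
  set r : ℝ := (3/2) * Real.exp (-(β * α)) with hr_def
  have hr0 : 0 < r := by positivity
  have hr1 : r < 1 := by
    rw [hr_def]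
    have : Real.exp (-(β * α)) < Real.exp (-hc) := by
      rw [Real.exp_lt_exp]; linarith
    have h2 : Real.exp (-hc) = 2/3 := by
      rw [hc, ← Real.log_inv, Real.exp_log (by norm_num)]
      norm_num
    nlinarith [Real.exp_pos (-(β * α))]
  -- choose N
  obtain ⟨N, hN⟩ := Metric.tendsto_atTop.1 (tendsto_pow_atTop_nhds_zero_of_lt_one hr0.le hr1)
    (ε * (1 - r)) (mul_pos hε (by linarith))
  refine ⟨N, fun m hm L => ?_⟩
  have hterm : ∀ k ∈ Finset.Icc 1 L, gibbs α β (m + L) (Bset k) ≤ r ^ (m + L - k) := by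
    intro k hk
    obtain ⟨hk1, hkL⟩ := Finset.mem_Icc.1 hk
    have hn1 : 1 ≤ m + L := by omega
    have hkn : k ≤ m + L := by omega
    rw [gibbs, integral_on_B hα.le hβ.le hk1 hkn]
    have hZ := Z_lower hα.le hβ.le hn1
    have hZpos := Z_pos hα.le hβ.le hn1
    have key : Real.exp (β * (α * k)) * ((1/3) * (2/3) ^ (k - 1))
        = r ^ (m + L - k) * (Real.exp (β * (α * (m + L))) * ((1/3) * (2/3) ^ (m + L - 1))) := by
      rw [hr_def, mul_pow, ← Real.exp_nat_mul]
      have hcast : ((m + L - k : ℕ) : ℝ) = (m + L : ℕ) - (k : ℝ) := by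
        push_cast [Nat.cast_sub hkn]
        ring
      rw [hcast]
      have hexp : Real.exp (((m + L : ℕ) - (k:ℝ)) * -(β * α)) * Real.exp (β * (α * (m + L)))
          = Real.exp (β * (α * k)) := by
        rw [← Real.exp_add, Real.exp_eq_exp]
        push_cast
        ring
      have hpow : ((3:ℝ)/2) ^ (m + L - k) * (2/3) ^ (m + L - 1) = (2/3) ^ (k - 1) := by
        have h1 : m + L - 1 = (k - 1) + (m + L - k) := by omega
        rw [h1, pow_add, ← mul_assoc, mul_comm (((3:ℝ)/2) ^ (m + L - k)), mul_assoc,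
          ← mul_pow]
        norm_num
      calc Real.exp (β * (α * k)) * ((1/3) * (2/3) ^ (k - 1))
          = (Real.exp (((m + L:ℕ) - (k:ℝ)) * -(β * α)) * Real.exp (β * (α * (m + L))))
            * ((1/3) * ((3/2) ^ (m + L - k) * (2/3) ^ (m + L - 1))) := by
            rw [hexp, hpow]
        _ = _ := by push_cast; ring
    rw [key]
    rw [mul_div_assoc]
    have hfrac : Real.exp (β * (α * (m + L))) * ((1/3) * (2/3) ^ (m + L - 1)) / Zf α β (m + L)
        ≤ 1 := by
      rw [div_le_one hZpos]
      convert hZ using 3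
      · rfl
      push_cast
      ring
    have hrpow : (0:ℝ) ≤ r ^ (m + L - k) := by positivity
    calc r ^ (m + L - k) * (Real.exp (β * (α * (m + L))) * ((1/3) * (2/3) ^ (m + L - 1))
            / Zf α β (m + L)) ≤ r ^ (m + L - k) * 1 :=
          mul_le_mul_of_nonneg_left hfrac hrpow
      _ = r ^ (m + L - k) := mul_one _
  have hsum : ∑ k ∈ Finset.Icc 1 L, gibbs α β (m + L) (Bset k)
      ≤ ∑ k ∈ Finset.Icc 1 L, r ^ (m + L - k) := Finset.sum_le_sum hterm
  have hre : ∑ k ∈ Finset.Icc 1 L, r ^ (m + L - k) = ∑ i ∈ Finset.Ico m (m + L), r ^ i := by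
    apply Finset.sum_nbij' (fun k => m + L - k) (fun i => m + L - i)
    · intro k hk; obtain ⟨h1, h2⟩ := Finset.mem_Icc.1 hk
      exact Finset.mem_Ico.2 ⟨by omega, by omega⟩
    · intro i hi; obtain ⟨h1, h2⟩ := Finset.mem_Ico.1 hi
      exact Finset.mem_Icc.2 ⟨by omega, by omega⟩
    · intro k hk; obtain ⟨h1, h2⟩ := Finset.mem_Icc.1 hk; omega
    · intro i hi; obtain ⟨h1, h2⟩ := Finset.mem_Ico.1 hi; omega
    · intro k hk; rfl
  have hgeo : ∑ i ∈ Finset.Ico m (m + L), r ^ i ≤ r ^ m / (1 - r) :=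
    geom_sum_Ico_le_of_lt_one hr0.le hr1
  have hrm : r ^ m ≤ r ^ N := pow_le_pow_of_le_one hr0.le hr1.le (by omega)
  have hNb : r ^ N < ε * (1 - r) := by
    have := hN N le_rfl
    rw [Real.dist_eq, sub_zero, abs_of_pos (by positivity)] at this
    exact this
  calc ∑ k ∈ Finset.Icc 1 L, gibbs α β (m + L) (Bset k)
      ≤ r ^ m / (1 - r) := by rw [← hre] at hgeo; linarith
    _ ≤ r ^ N / (1 - r) := by
        gcongr
    _ < ε := by
        rw [div_lt_iff₀ (by linarith)]
        linarith
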